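/- For every m ∈ ℕ, the m-th moment of the walk length under the self-avoiding walk measure on K_n with fugacity z and ν = n/z satisfies E_{n,z}(L_n^m) = ∑_{l=0}^m (−1)^l C(m,l) (n−1)^{m−l} · (e^{-ν}/Q(n,ν)) · (ν d/dν)^l [e^ν Q(n,ν)]. -/

import Mathlib

open Filter Finset Real

/-- Number of `k`-step SAWs weight: `(z/n)^k` times the number of walks. -/
noncomputable def sawWeight (n : ℕ) (z : ℝ) (k : ℕ) : ℝ :=
  (z / n) ^ k * ((n - 1).descFactorial k)

/-- Partition function of the variable-length SAW model on `K_n`. -/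
noncomputable def sawZ (n : ℕ) (z : ℝ) : ℝ := ∑ k ∈ Finset.range n, sawWeight n z k

/-- Probability that the walk length equals `k`. -/
noncomputable def sawProb (n : ℕ) (z : ℝ) (k : ℕ) : ℝ := sawWeight n z k / sawZ n z

/-- Mean walk length. -/
noncomputable def sawMean (n : ℕ) (z : ℝ) : ℝ := ∑ k ∈ Finset.range n, (k : ℝ) * sawProb n z k

/-- Variance of the walk length. -/
noncomputable def sawVar (n : ℕ) (z : ℝ) : ℝ :=
  (∑ k ∈ Finset.range n, (k : ℝ) ^ 2 * sawProb n z k) - (sawMean n z) ^ 2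

/-- Tail distribution `P(L_n > x)` for real `x`. -/
noncomputable def sawTail (n : ℕ) (z : ℝ) (x : ℝ) : ℝ :=
  ∑ k ∈ Finset.range n, if x < (k : ℝ) then sawProb n z k else 0

/-- Regularised incomplete gamma function at integer first argument,
    `Q(n, ν) = e^{-ν} ∑_{j<n} ν^j/j!`. -/
noncomputable def Qreg (n : ℕ) (ν : ℝ) : ℝ :=
  Real.exp (-ν) * ∑ j ∈ Finset.range n, ν ^ j / (Nat.factorial j)

/-- `H_n(ν) = Γ(n) Q(n,ν) / (ν^n e^{-ν})`. -/
noncomputable def Hfun (n : ℕ) (ν : ℝ) : ℝ :=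
  Real.Gamma n * Qreg n ν / (ν ^ n * Real.exp (-ν))

/-- Standard normal density. -/
noncomputable def normpdf (x : ℝ) : ℝ := Real.exp (-x ^ 2 / 2) / Real.sqrt (2 * Real.pi)

/-- Standard normal tail distribution `Φ̄`. -/
noncomputable def normTail (x : ℝ) : ℝ := ∫ t in Set.Ioi x, normpdf t

/-- `η(λ) = sgn(λ-1) √(2(λ-1-log λ))`. -/
noncomputable def etaF (l : ℝ) : ℝ := Real.sign (l - 1) * Real.sqrt (2 * (l - 1 - Real.log l))

/-- `Γ*(n) = √(n/(2π)) e^n n^{-n} Γ(n)`. -/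
noncomputable def gammaStar (n : ℕ) : ℝ :=
  Real.sqrt (n / (2 * Real.pi)) * Real.exp n * ((n : ℝ) ^ n)⁻¹ * Real.Gamma n

/-- The operator `(ν d/dν)^l`. -/
noncomputable def thetaOp : ℕ → (ℝ → ℝ) → (ℝ → ℝ)
  | 0, f => f
  | (l + 1), f => fun ν => ν * deriv (thetaOp l f) ν


lemma expQreg_eq (n : ℕ) :
    (fun t => Real.exp t * Qreg n t)
      = fun t : ℝ => ∑ j ∈ Finset.range n, t ^ j / (Nat.factorial j) := by
  funext t
  unfold Qreg
  rw [← mul_assoc, ← Real.exp_add, add_neg_cancel, Real.exp_zero, one_mul]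

lemma theta_sum (n : ℕ) (l : ℕ) :
    thetaOp l (fun t : ℝ => ∑ j ∈ Finset.range n, t ^ j / (Nat.factorial j))
      = fun t : ℝ => ∑ j ∈ Finset.range n, (j : ℝ) ^ l * t ^ j / (Nat.factorial j) := by
  induction l with
  | zero => simp [thetaOp]
  | succ l ih =>
    show (fun ν : ℝ => ν * deriv (thetaOp l _) ν) = _
    rw [ih]
    funext ν
    have hd : HasDerivAt (fun t : ℝ => ∑ j ∈ Finset.range n, (j : ℝ) ^ l * t ^ j / (Nat.factorial j))
        (∑ j ∈ Finset.range n, (j : ℝ) ^ l * ((j : ℝ) * ν ^ (j - 1)) / (Nat.factorial j)) ν := by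
      apply HasDerivAt.fun_sum
      intro j hj
      have h1 : HasDerivAt (fun t : ℝ => t ^ j) ((j : ℝ) * ν ^ (j - 1)) ν := hasDerivAt_pow j ν
      simpa [mul_div_assoc, mul_comm, mul_left_comm] using
        ((h1.const_mul ((j : ℝ) ^ l)).div_const (Nat.factorial j : ℝ))
    rw [hd.deriv, Finset.mul_sum]
    refine Finset.sum_congr rfl fun j _ => ?_
    cases j with
    | zero => simp
    | succ j =>
      push_cast
      ring

lemma reflect_sum (n : ℕ) (hn : 1 ≤ n) (z : ℝ) (hz : 0 < z) (m : ℕ) :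
    ∑ k ∈ Finset.range n, (k : ℝ) ^ m * sawWeight n z k
      = (z / n) ^ (n - 1) * (Nat.factorial (n - 1))
          * ∑ j ∈ Finset.range n, ((n : ℝ) - 1 - j) ^ m * (((n : ℝ) / z) ^ j / (Nat.factorial j)) := by
  have hn0 : (0 : ℝ) < (n : ℝ) := by exact_mod_cast hn
  rw [← Finset.sum_range_reflect (fun k => (k : ℝ) ^ m * sawWeight n z k) n, Finset.mul_sum]
  refine Finset.sum_congr rfl fun j hj => ?_
  have hjn : j ≤ n - 1 := by
    have := Finset.mem_range.mp hj; omega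
  have hd : n - 1 - (n - 1 - j) = j := by omega
  have hfacn : Nat.factorial j * (n - 1).descFactorial (n - 1 - j) = Nat.factorial (n - 1) := by
    have := Nat.factorial_mul_descFactorial (show n - 1 - j ≤ n - 1 by omega)
    rwa [hd] at this
  have hfac : (Nat.factorial j : ℝ) * ((n - 1).descFactorial (n - 1 - j) : ℝ)
      = (Nat.factorial (n - 1) : ℝ) := by exact_mod_cast congrArg (Nat.cast (R := ℝ)) hfacn
  have hcast : ((n - 1 - j : ℕ) : ℝ) = (n : ℝ) - 1 - j := by
    rw [Nat.cast_sub hjn, Nat.cast_sub hn, Nat.cast_one]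
  have hzn : z / (n : ℝ) ≠ 0 := by positivity
  have hinv : (z / n) * ((n : ℝ) / z) = 1 := by
    field_simp
  have hpow : (z / n) ^ (n - 1 - j) = (z / n) ^ (n - 1) * ((n : ℝ) / z) ^ j := by
    have hadd : (n - 1 - j) + j = n - 1 := by omega
    have h3 : (z / n) ^ (n - 1) = (z / n) ^ (n - 1 - j) * (z / n) ^ j := by
      rw [← pow_add, hadd]
    rw [h3, mul_assoc, ← mul_pow, hinv, one_pow, mul_one]
  unfold sawWeight
  rw [hcast, hpow, ← hfac]
  have hfj : (Nat.factorial j : ℝ) ≠ 0 := by positivity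
  field_simp

theorem saw_moment_eq (n : ℕ) (hn : 1 ≤ n) (z : ℝ) (hz : 0 < z) (m : ℕ) :
    (∑ k ∈ Finset.range n, (k : ℝ) ^ m * sawProb n z k)
      = ∑ l ∈ Finset.range (m + 1),
          (-1 : ℝ) ^ l * (m.choose l) * ((n : ℝ) - 1) ^ (m - l)
            * (Real.exp (-(n / z)) / Qreg n (n / z))
            * thetaOp l (fun t => Real.exp t * Qreg n t) (n / z) := by
  classical
  set ν : ℝ := (n : ℝ) / z with hν
  have hn0 : (0 : ℝ) < (n : ℝ) := by exact_mod_cast hn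
  have hν0 : 0 < ν := by positivity
  set S : ℝ := ∑ j ∈ Finset.range n, ν ^ j / (Nat.factorial j) with hS
  have hSpos : 0 < S := by
    apply Finset.sum_pos
    · intro j _; positivity
    · exact ⟨0, Finset.mem_range.mpr (by omega)⟩
  have hQ : Qreg n ν = Real.exp (-ν) * S := rfl
  have hfrac : Real.exp (-ν) / Qreg n ν = S⁻¹ := by
    rw [hQ, div_mul_eq_div_div, div_self (Real.exp_ne_zero _), one_div]
  have hR : ∀ l, thetaOp l (fun t => Real.exp t * Qreg n t) ν
      = ∑ j ∈ Finset.range n, (j : ℝ) ^ l * ν ^ j / (Nat.factorial j) := by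
    intro l
    rw [expQreg_eq, theta_sum]
  have hRHS : (∑ l ∈ Finset.range (m + 1),
        (-1 : ℝ) ^ l * (m.choose l) * ((n : ℝ) - 1) ^ (m - l)
          * (Real.exp (-ν) / Qreg n ν)
          * thetaOp l (fun t => Real.exp t * Qreg n t) ν)
      = S⁻¹ * ∑ j ∈ Finset.range n, ((n : ℝ) - 1 - j) ^ m * (ν ^ j / (Nat.factorial j)) := by
    simp only [hfrac, hR, Finset.mul_sum]
    rw [Finset.sum_comm]
    refine Finset.sum_congr rfl fun j _ => ?_
    have hbin : ((-(j : ℝ)) + ((n : ℝ) - 1)) ^ m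
        = ∑ l ∈ Finset.range (m + 1), (-(j : ℝ)) ^ l * ((n : ℝ) - 1) ^ (m - l) * (m.choose l) :=
      add_pow _ _ m
    have hb2 : ((n : ℝ) - 1 - j) ^ m
        = ∑ l ∈ Finset.range (m + 1), (-(j : ℝ)) ^ l * ((n : ℝ) - 1) ^ (m - l) * (m.choose l) := by
      rw [← hbin]; congr 1; ring
    rw [hb2, Finset.sum_mul, Finset.mul_sum]
    refine Finset.sum_congr rfl fun l _ => ?_
    rw [neg_pow]
    ring
  rw [hRHS]
  unfold sawProb sawZ
  have hsum : (∑ k ∈ Finset.range n, (k : ℝ) ^ m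
        * (sawWeight n z k / (∑ k ∈ Finset.range n, sawWeight n z k)))
      = (∑ k ∈ Finset.range n, (k : ℝ) ^ m * sawWeight n z k)
          / (∑ k ∈ Finset.range n, sawWeight n z k) := by
    rw [Finset.sum_div]
    exact Finset.sum_congr rfl fun k _ => by ring
  have hZ : (∑ k ∈ Finset.range n, sawWeight n z k)
      = (z / n) ^ (n - 1) * (Nat.factorial (n - 1)) * S := by
    rw [hS, hν]
    simpa using reflect_sum n hn z hz 0
  rw [hsum, reflect_sum n hn z hz m, hZ]
  have hc : (z / n) ^ (n - 1) * (Nat.factorial (n - 1) : ℝ) ≠ 0 := by positivity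
  rw [mul_div_mul_left _ _ hc, div_eq_inv_mul]
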